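/- DL-Lite_FR is not closed under ABox contraction for glob^atoms_⊆ and for all four local semantics loc^y_z (y ∈ {atoms, symbols}, z ∈ {⊆, ♯}), already when the information to be contracted is a single ABox assertion. In particular, taking the same initial KBs as in the corresponding ABox-expansion cases — (a) the DL-Lite_core KB with TBox T = {EmpWife ⊑ Wife, Wife ⊑ ∃HasHusband, ∃HasHusband ⊑ Wife, Priest ⊑ ¬∃HasHusband⁻} and ABox {EmpWife(mary), HasHusband(mary, john), Priest(adam), Priest(bob)} for loc^atoms_⊆ and loc^atoms_♯, (b) the variant with P0 ⊑ Priest, P1 ⊑ Priest, P2 ⊑ Priest and ABox {HasHusband(mary, john), Priest(adam), P1(adam), Priest(bob), P2(bob)} for loc^symbols_⊆ and loc^symbols_♯, and (c) the DL-Lite_F variant with funct(HasHusband) added for glob^atoms_⊆ — and contracting the assertion N = {HasHusband(mary, john)}, the resulting set of interpretations K ⊖ N is not Mod(K') for any DL-Lite_FR KB K'. -/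

import Mathlib

namespace DLLite

/-- The countably infinite domain of constants. -/
abbrev Δ : Type := ℕ
/-- Countably infinite set of concept names. -/
abbrev ConceptName : Type := ℕ
/-- Countably infinite set of role names. -/
abbrev RoleName : Type := ℕ

/-- An interpretation assigns a set of domain elements to each concept name
and a binary relation to each role name; constants are interpreted as themselves. -/
structure Interp where
  concept : ConceptName → Set Δ
  role : RoleName → Set (Δ × Δ)

/-- Basic roles: `P` or `P⁻`. -/
inductive BasicRole where
  | pos (P : RoleName)
  | inv (P : RoleName)
deriving DecidableEq

def BasicRole.interp (R : BasicRole) (I : Interp) : Set (Δ × Δ) :=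
  match R with
  | .pos P => I.role P
  | .inv P => {p | (p.2, p.1) ∈ I.role P}

/-- Basic concepts: `A` or `∃R`. -/
inductive BasicConcept where
  | atom (A : ConceptName)
  | ex (R : BasicRole)
deriving DecidableEq

def BasicConcept.interp (B : BasicConcept) (I : Interp) : Set Δ :=
  match B with
  | .atom A => I.concept A
  | .ex R => {o | ∃ o', (o, o') ∈ R.interp I}

/-- DL-Lite_FR assertions: (negative) concept/role inclusions, functionality
assertions, and membership assertions. -/
inductive Assertion where
  | conceptIncl (B1 B2 : BasicConcept)
  | conceptDisj (B1 B2 : BasicConcept)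
  | roleIncl (R1 R2 : BasicRole)
  | roleDisj (R1 R2 : BasicRole)
  | funct (R : BasicRole)
  | memberC (A : ConceptName) (a : Δ)
  | memberR (P : RoleName) (a b : Δ)
deriving DecidableEq

/-- Satisfaction of an assertion by an interpretation. -/
def Interp.sat (I : Interp) : Assertion → Prop
  | .conceptIncl B1 B2 => B1.interp I ⊆ B2.interp I
  | .conceptDisj B1 B2 => B1.interp I ∩ B2.interp I = ∅
  | .roleIncl R1 R2 => R1.interp I ⊆ R2.interp I
  | .roleDisj R1 R2 => R1.interp I ∩ R2.interp I = ∅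
  | .funct R => ∀ o o1 o2, (o, o1) ∈ R.interp I → (o, o2) ∈ R.interp I → o1 = o2
  | .memberC A a => a ∈ I.concept A
  | .memberR P a b => (a, b) ∈ I.role P

/-- TBox assertions: inclusion or functionality assertions. -/
def Assertion.isTBox : Assertion → Prop
  | .memberC _ _ => False
  | .memberR _ _ _ => False
  | _ => True

/-- Membership (ABox) assertions. -/
def Assertion.isMembership : Assertion → Prop
  | .memberC _ _ => True
  | .memberR _ _ _ => True
  | _ => False

/-- The constants occurring in an assertion. -/
def Assertion.constants : Assertion → Set Δ
  | .memberC _ a => {a}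
  | .memberR _ a b => {a, b}
  | _ => ∅

/-- A knowledge base: a finite set of assertions (TBox ∪ ABox). -/
abbrev KB := Finset Assertion

/-- The set of models of a KB. -/
def Mod (K : KB) : Set Interp := {I | ∀ a ∈ K, I.sat a}

/-- Interpretations falsifying at least one assertion of `K`. -/
def NonMod (K : KB) : Set Interp := {I | ∃ a ∈ K, ¬ I.sat a}

/-- The constants occurring in a KB. -/
def KB.constants (K : KB) : Set Δ := ⋃ a ∈ K, Assertion.constants a

/-- Atoms: ground facts `A(o)` or `P(o,o')`. -/
inductive Atom where
  | c (A : ConceptName) (o : Δ)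
  | r (P : RoleName) (o o' : Δ)
deriving DecidableEq

/-- The atom set of an interpretation. -/
def Interp.atoms (I : Interp) : Set Atom :=
  fun a => match a with
  | .c A o => o ∈ I.concept A
  | .r P o o' => (o, o') ∈ I.role P

/-- Concept or role names (symbols). -/
inductive SName where
  | c (A : ConceptName)
  | r (P : RoleName)
deriving DecidableEq

/-- Atom-based set distance: symmetric difference of atom sets. -/
def distASub (I J : Interp) : Set Atom := symmDiff I.atoms J.atoms
/-- Atom-based cardinality distance. -/
noncomputable def distACard (I J : Interp) : ℕ∞ := (symmDiff I.atoms J.atoms).encard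
/-- Symbol-based set distance: names interpreted differently. -/
def distSSub (I J : Interp) : Set SName :=
  fun n => match n with
  | .c A => I.concept A ≠ J.concept A
  | .r P => I.role P ≠ J.role P
/-- Symbol-based cardinality distance. -/
noncomputable def distSCard (I J : Interp) : ℕ∞ := (distSSub I J).encard

/-- Global expansion w.r.t. a distance. -/
def expGlobD {D : Type} [PartialOrder D] (dist : Interp → Interp → D)
    (M N : Set Interp) : Set Interp :=
  {J | J ∈ N ∧ ∃ I ∈ M, ∀ I' ∈ M, ∀ J' ∈ N, ¬ dist I' J' < dist I J}

/-- Local expansion w.r.t. a distance. -/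
def expLocD {D : Type} [PartialOrder D] (dist : Interp → Interp → D)
    (M N : Set Interp) : Set Interp :=
  {J | J ∈ N ∧ ∃ I ∈ M, ∀ J' ∈ N, ¬ dist I J' < dist I J}

inductive LocKind | glob | loc
inductive MeasKind | atoms | symbols
inductive OrdKind | subset | card

/-- The expansion operator on sets of interpretations for each of the
eight model-based semantics `X^y_z`. -/
def expansionSet : LocKind → MeasKind → OrdKind → Set Interp → Set Interp → Set Interp
  | .glob, .atoms, .subset => expGlobD distASub
  | .glob, .atoms, .card => expGlobD distACard
  | .glob, .symbols, .subset => expGlobD distSSub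
  | .glob, .symbols, .card => expGlobD distSCard
  | .loc, .atoms, .subset => expLocD distASub
  | .loc, .atoms, .card => expLocD distACard
  | .loc, .symbols, .subset => expLocD distSSub
  | .loc, .symbols, .card => expLocD distSCard

/-- KB expansion `K ⊕ N` under semantics `X^y_z`. -/
def expandKB (X : LocKind) (y : MeasKind) (z : OrdKind) (K N : KB) : Set Interp :=
  expansionSet X y z (Mod K) (Mod N)

/-- KB contraction `K ⊖ N` under semantics `X^y_z`. -/
def contractKB (X : LocKind) (y : MeasKind) (z : OrdKind) (K N : KB) : Set Interp :=
  Mod K ∪ expansionSet X y z (Mod K) (NonMod N)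

/-- Union of two interpretations. -/
def Interp.union (I1 I2 : Interp) : Interp :=
  ⟨fun A => I1.concept A ∪ I2.concept A, fun P => I1.role P ∪ I2.role P⟩

/-- The support set of an interpretation. -/
def Interp.support (I : Interp) : Set Δ :=
  (⋃ A, I.concept A) ∪ (⋃ P, {o | ∃ o', (o, o') ∈ I.role P ∨ (o', o) ∈ I.role P})

/-- The image `I^f` of an interpretation under an (injective) map `f`. -/
def Interp.image (I : Interp) (f : Δ → Δ) : Interp :=
  ⟨fun A => f '' I.concept A, fun P => (fun p => (f p.1, f p.2)) '' I.role P⟩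

/-- `h` is a homomorphism from `I` to `J`. -/
def IsHom (h : Δ → Δ) (I J : Interp) : Prop :=
  (∀ A, h '' I.concept A ⊆ J.concept A) ∧
  (∀ P o o', (o, o') ∈ I.role P → (h o, h o') ∈ J.role P)

end DLLite

namespace DLLite

def EmpWife : ConceptName := 0
def Wife : ConceptName := 1
def Priest : ConceptName := 2
def P0 : ConceptName := 3
def P1 : ConceptName := 4
def P2 : ConceptName := 5
def HasHusband : RoleName := 0
def mary : Δ := 0
def john : Δ := 1
def adam : Δ := 2
def bob : Δ := 3

/-- T = {EmpWife ⊑ Wife, Wife ⊑ ∃HasHusband, ∃HasHusband ⊑ Wife,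
Priest ⊑ ¬∃HasHusband⁻}. -/
def Ta : Finset Assertion :=
  { .conceptIncl (.atom EmpWife) (.atom Wife),
    .conceptIncl (.atom Wife) (.ex (.pos HasHusband)),
    .conceptIncl (.ex (.pos HasHusband)) (.atom Wife),
    .conceptDisj (.atom Priest) (.ex (.inv HasHusband)) }

/-- A = {EmpWife(mary), HasHusband(mary, john), Priest(adam), Priest(bob)}. -/
def Aa : Finset Assertion :=
  { .memberC EmpWife mary,
    .memberR HasHusband mary john,
    .memberC Priest adam,
    .memberC Priest bob }

/-- The DL-Lite_core KB of case (a). -/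
def Ka : KB := Ta ∪ Aa

/-- T' = {Wife ⊑ ∃HasHusband, ∃HasHusband ⊑ Wife, Priest ⊑ ¬∃HasHusband⁻,
P0 ⊑ Priest, P1 ⊑ Priest, P2 ⊑ Priest}. -/
def Tb : Finset Assertion :=
  { .conceptIncl (.atom Wife) (.ex (.pos HasHusband)),
    .conceptIncl (.ex (.pos HasHusband)) (.atom Wife),
    .conceptDisj (.atom Priest) (.ex (.inv HasHusband)),
    .conceptIncl (.atom P0) (.atom Priest),
    .conceptIncl (.atom P1) (.atom Priest),
    .conceptIncl (.atom P2) (.atom Priest) }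

/-- A' = {HasHusband(mary, john), Priest(adam), P1(adam), Priest(bob), P2(bob)}. -/
def Ab : Finset Assertion :=
  { .memberR HasHusband mary john,
    .memberC Priest adam,
    .memberC P1 adam,
    .memberC Priest bob,
    .memberC P2 bob }

/-- The DL-Lite_core KB of case (b). -/
def Kb : KB := Tb ∪ Ab

/-- The DL-Lite_F KB of case (c): case (a) plus funct(HasHusband). -/
def Kc : KB := Ka ∪ { .funct (.pos HasHusband) }

end DLLite

namespace DLLite

/-- N = {HasHusband(mary, john)}, the single ABox assertion to contract. -/
def Ncb : KB := { .memberR HasHusband mary john }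

/-! ### Auxiliary lemmas for the inexpressibility proof -/

section Closure

lemma role_interp_union (R : BasicRole) (I J : Interp) :
    R.interp (I.union J) = R.interp I ∪ R.interp J := by
  cases R <;> ext ⟨o, o'⟩ <;> simp [BasicRole.interp, Interp.union]

lemma concept_interp_union (B : BasicConcept) (I J : Interp) :
    B.interp (I.union J) = B.interp I ∪ B.interp J := by
  cases B with
  | atom A => rfl
  | ex R =>
    ext o
    simp [BasicConcept.interp, role_interp_union, Set.mem_union, exists_or]

lemma role_interp_image (R : BasicRole) (I : Interp) (f : Δ → Δ) :
    R.interp (I.image f) = (fun p => (f p.1, f p.2)) '' R.interp I := by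
  cases R with
  | pos P => rfl
  | inv P =>
    ext ⟨o, o'⟩
    constructor
    · rintro ⟨⟨a, b⟩, hab, heq⟩
      simp only [Prod.mk.injEq] at heq
      exact ⟨(b, a), hab, by simp [heq.1, heq.2]⟩
    · rintro ⟨⟨a, b⟩, hab, heq⟩
      simp only [Prod.mk.injEq] at heq
      exact ⟨(b, a), hab, by simp [heq.1, heq.2]⟩

lemma concept_interp_image (B : BasicConcept) (I : Interp) (f : Δ → Δ) :
    B.interp (I.image f) = f '' B.interp I := by
  cases B with
  | atom A => rfl
  | ex R =>
    ext o
    simp only [BasicConcept.interp, role_interp_image, Set.mem_image, Set.mem_setOf_eq]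
    constructor
    · rintro ⟨o', ⟨a, b⟩, hab, heq⟩
      simp at heq
      exact ⟨a, ⟨b, hab⟩, heq.1⟩
    · rintro ⟨a, ⟨b, hab⟩, rfl⟩
      exact ⟨f b, ⟨(a, b), hab, rfl⟩⟩

lemma mem_support_concept {I : Interp} {A : ConceptName} {o : Δ}
    (h : o ∈ I.concept A) : o ∈ I.support :=
  Or.inl (Set.mem_iUnion.2 ⟨A, h⟩)

lemma mem_support_role {I : Interp} {P : RoleName} {o o' : Δ}
    (h : (o, o') ∈ I.role P) : o ∈ I.support ∧ o' ∈ I.support :=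
  ⟨Or.inr (Set.mem_iUnion.2 ⟨P, ⟨o', Or.inl h⟩⟩),
   Or.inr (Set.mem_iUnion.2 ⟨P, ⟨o, Or.inr h⟩⟩)⟩

lemma rinterp_support {R : BasicRole} {I : Interp} {o o' : Δ}
    (h : (o, o') ∈ R.interp I) : o ∈ I.support ∧ o' ∈ I.support := by
  cases R with
  | pos P => exact mem_support_role h
  | inv P => exact (mem_support_role h).symm

lemma cinterp_support {B : BasicConcept} {I : Interp} {o : Δ}
    (h : o ∈ B.interp I) : o ∈ I.support := by
  cases B with
  | atom A => exact mem_support_concept h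
  | ex R => obtain ⟨o', h'⟩ := h; exact (rinterp_support h').1

/-- Key closure property: the models of any KB are closed under taking the union
with an isomorphic copy on disjoint support. -/
lemma sat_union_image {I : Interp} {f : Δ → Δ} (hf : Function.Injective f)
    (hd : ∀ x, x ∈ I.support → x ∈ (I.image f).support → False)
    {a : Assertion} (ha : I.sat a) : (I.union (I.image f)).sat a := by
  cases a with
  | conceptIncl B1 B2 =>
    simp only [Interp.sat, concept_interp_union] at *
    refine Set.union_subset_union ha ?_
    rw [concept_interp_image, concept_interp_image]
    exact Set.image_mono ha
  | conceptDisj B1 B2 =>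
    simp only [Interp.sat] at *
    rw [Set.eq_empty_iff_forall_notMem]
    rintro o ⟨h1, h2⟩
    rw [concept_interp_union] at h1 h2
    rcases h1 with h1 | h1 <;> rcases h2 with h2 | h2
    · exact Set.eq_empty_iff_forall_notMem.1 ha o ⟨h1, h2⟩
    · exact hd o (cinterp_support h1) (cinterp_support h2)
    · exact hd o (cinterp_support h2) (cinterp_support h1)
    · rw [concept_interp_image] at h1 h2
      obtain ⟨x, hx, rfl⟩ := h1
      obtain ⟨y, hy, hxy⟩ := h2
      rw [hf hxy] at hy
      exact Set.eq_empty_iff_forall_notMem.1 ha x ⟨hx, hy⟩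
  | roleIncl R1 R2 =>
    simp only [Interp.sat, role_interp_union] at *
    refine Set.union_subset_union ha ?_
    rw [role_interp_image, role_interp_image]
    exact Set.image_mono ha
  | roleDisj R1 R2 =>
    simp only [Interp.sat] at *
    rw [Set.eq_empty_iff_forall_notMem]
    rintro ⟨o, o'⟩ ⟨h1, h2⟩
    rw [role_interp_union] at h1 h2
    rcases h1 with h1 | h1 <;> rcases h2 with h2 | h2
    · exact Set.eq_empty_iff_forall_notMem.1 ha (o, o') ⟨h1, h2⟩
    · exact hd o (rinterp_support h1).1 (rinterp_support h2).1
    · exact hd o (rinterp_support h2).1 (rinterp_support h1).1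
    · rw [role_interp_image] at h1 h2
      obtain ⟨⟨x1, x2⟩, hx, hxe⟩ := h1
      obtain ⟨⟨y1, y2⟩, hy, hye⟩ := h2
      simp only [Prod.mk.injEq] at hxe hye
      have e1 : y1 = x1 := hf (by rw [hxe.1, hye.1])
      have e2 : y2 = x2 := hf (by rw [hxe.2, hye.2])
      rw [e1, e2] at hy
      exact Set.eq_empty_iff_forall_notMem.1 ha (x1, x2) ⟨hx, hy⟩
  | funct R =>
    simp only [Interp.sat] at *
    intro o o1 o2 h1 h2
    rw [role_interp_union] at h1 h2
    rcases h1 with h1 | h1 <;> rcases h2 with h2 | h2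
    · exact ha o o1 o2 h1 h2
    · exact absurd (rinterp_support h2).1 (fun h => hd o (rinterp_support h1).1 h)
    · exact absurd (rinterp_support h1).1 (fun h => hd o (rinterp_support h2).1 h)
    · rw [role_interp_image] at h1 h2
      obtain ⟨⟨x1, x2⟩, hx, hxe⟩ := h1
      obtain ⟨⟨y1, y2⟩, hy, hye⟩ := h2
      simp only [Prod.mk.injEq] at hxe hye
      have e1 : y1 = x1 := hf (by rw [hxe.1, hye.1])
      rw [e1] at hy
      rw [← hxe.2, ← hye.2, ha x1 x2 y2 hx hy]
  | memberC A c =>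
    exact Or.inl ha
  | memberR P c d =>
    exact Or.inl ha

lemma support_image_subset {I : Interp} {f : Δ → Δ} {o : Δ}
    (h : o ∈ (I.image f).support) : ∃ x ∈ I.support, o = f x := by
  rcases h with h | h
  · obtain ⟨A, hA⟩ := Set.mem_iUnion.1 h
    obtain ⟨x, hx, rfl⟩ := hA
    exact ⟨x, mem_support_concept hx, rfl⟩
  · obtain ⟨P, hP⟩ := Set.mem_iUnion.1 h
    obtain ⟨o', h'⟩ := hP
    rcases h' with h' | h'
    · obtain ⟨⟨a, b⟩, hab, he⟩ := h'
      simp only [Prod.mk.injEq] at he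
      exact ⟨a, (mem_support_role hab).1, he.1.symm⟩
    · obtain ⟨⟨a, b⟩, hab, he⟩ := h'
      simp only [Prod.mk.injEq] at he
      exact ⟨b, (mem_support_role hab).2, he.2.symm⟩

end Closure

section Concrete

/-- Interpretation with EmpWife = Wife = {mary}, Priest = {adam, bob}, no roles. -/
def J0a : Interp :=
  ⟨fun A => if A = 0 then {0} else if A = 1 then {0} else if A = 2 then {2, 3} else ∅,
   fun _ => ∅⟩

/-- `J0a` plus HasHusband(mary, john). -/
def I0a : Interp := ⟨J0a.concept, fun P => if P = 0 then {(0, 1)} else ∅⟩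

def fa : Δ → Δ := fun x => x + 4

def Ua : Interp := J0a.union (J0a.image fa)

/-- Interpretation with Wife = {mary}, Priest = {adam, bob}, P1 = {adam},
P2 = {bob}, no roles. -/
def J0b : Interp :=
  ⟨fun A => if A = 1 then {0} else if A = 2 then {2, 3} else
      if A = 4 then {2} else if A = 5 then {3} else ∅,
   fun _ => ∅⟩

/-- `J0b` plus HasHusband(mary, john). -/
def I0b : Interp := ⟨J0b.concept, fun P => if P = 0 then {(0, 1)} else ∅⟩

def fb : Δ → Δ := fun x => if x = 2 then 1 else x + 4

def Ub : Interp := J0b.union (J0b.image fb)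

lemma fa_inj : Function.Injective fa := by
  intro x y h; simpa [fa] using h

lemma fb_inj : Function.Injective fb := by
  intro x y h
  simp only [fb] at h
  split_ifs at h <;> simp_all

lemma J0a_support {x : Δ} (h : x ∈ J0a.support) : x = 0 ∨ x = 2 ∨ x = 3 := by
  rcases h with h | h
  · obtain ⟨A, hA⟩ := Set.mem_iUnion.1 h
    simp only [J0a] at hA
    split_ifs at hA <;> simp_all
  · obtain ⟨P, hP⟩ := Set.mem_iUnion.1 h
    obtain ⟨o', h'⟩ := hP
    simp [J0a] at h'

lemma J0b_support {x : Δ} (h : x ∈ J0b.support) : x = 0 ∨ x = 2 ∨ x = 3 := by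
  rcases h with h | h
  · obtain ⟨A, hA⟩ := Set.mem_iUnion.1 h
    simp only [J0b] at hA
    split_ifs at hA <;> simp_all
  · obtain ⟨P, hP⟩ := Set.mem_iUnion.1 h
    obtain ⟨o', h'⟩ := hP
    simp [J0b] at h'

lemma hd_a : ∀ x, x ∈ J0a.support → x ∈ (J0a.image fa).support → False := by
  intro x h1 h2
  obtain ⟨y, hy, rfl⟩ := support_image_subset h2
  have h3 := J0a_support h1
  have h4 := J0a_support hy
  rcases h4 with rfl | rfl | rfl <;> simp [fa] at h3

lemma hd_b : ∀ x, x ∈ J0b.support → x ∈ (J0b.image fb).support → False := by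
  intro x h1 h2
  obtain ⟨y, hy, rfl⟩ := support_image_subset h2
  have h3 := J0b_support h1
  have h4 := J0b_support hy
  rcases h4 with rfl | rfl | rfl <;> simp [fb] at h3

lemma Ua_role (P : RoleName) : Ua.role P = ∅ := by
  simp [Ua, Interp.union, Interp.image, J0a]

lemma Ub_role (P : RoleName) : Ub.role P = ∅ := by
  simp [Ub, Interp.union, Interp.image, J0b]

lemma Ua_wife_4 : (4 : Δ) ∈ Ua.concept 1 := by
  simp only [Ua, Interp.union, Interp.image, J0a]
  right
  exact ⟨0, by simp [fa]⟩

lemma Ub_priest_1 : (1 : Δ) ∈ Ub.concept 2 := by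
  simp only [Ub, Interp.union, Interp.image, J0b]
  right
  exact ⟨2, by simp [fb]⟩

lemma I0a_mod_Ka : I0a ∈ Mod Ka := by
  intro a ha
  simp only [Ka, Ta, Aa, Finset.mem_union, Finset.mem_insert, Finset.mem_singleton] at ha
  rcases ha with ((h | h | h | h) | (h | h | h | h)) <;> subst h <;>
    simp only [Interp.sat, BasicConcept.interp, BasicRole.interp, I0a, J0a,
      EmpWife, Wife, Priest, HasHusband, mary, john, adam, bob]
  · simp
  · intro x hx
    simp at hx
    subst hx
    exact ⟨1, by simp⟩
  · rintro x ⟨o', ho'⟩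
    simp at ho' ⊢
    exact ho'.1
  · rw [Set.eq_empty_iff_forall_notMem]
    rintro x ⟨h1, o', h2⟩
    simp at h1 h2
    rcases h1 with h1 | h1 <;> rcases h2 with ⟨h2a, h2b⟩ <;> simp_all
  · simp
  · simp
  · simp
  · simp

lemma I0a_mod_Kc : I0a ∈ Mod Kc := by
  intro a ha
  simp only [Kc, Finset.mem_union, Finset.mem_singleton] at ha
  rcases ha with ha | ha
  · exact I0a_mod_Ka a ha
  · subst ha
    intro o o1 o2 h1 h2
    simp only [BasicRole.interp, I0a, HasHusband] at h1 h2
    simp at h1 h2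
    rw [h1.2, h2.2]

lemma I0b_mod_Kb : I0b ∈ Mod Kb := by
  intro a ha
  simp only [Kb, Tb, Ab, Finset.mem_union, Finset.mem_insert, Finset.mem_singleton] at ha
  rcases ha with ((h | h | h | h | h | h) | (h | h | h | h | h)) <;> subst h <;>
    simp only [Interp.sat, BasicConcept.interp, BasicRole.interp, I0b, J0b,
      Wife, Priest, HasHusband, P0, P1, P2, mary, john, adam, bob]
  · intro x hx
    simp at hx
    subst hx
    exact ⟨1, by simp⟩
  · rintro x ⟨o', ho'⟩
    simp at ho' ⊢
    exact ho'.1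
  · rw [Set.eq_empty_iff_forall_notMem]
    rintro x ⟨h1, o', h2⟩
    simp at h1 h2
    rcases h1 with h1 | h1 <;> rcases h2 with ⟨h2a, h2b⟩ <;> simp_all
  · simp
  · simp
  · simp
  · simp
  · simp
  · simp
  · simp
  · simp

end Concrete

section Distances

lemma not_lt_singleton' {α : Type} {s : Set α} {a : α} (h : a ∈ s) : ¬ s < {a} := by
  intro hl
  exact hl.ne (le_antisymm hl.le (Set.singleton_subset_iff.2 h))

lemma not_encard_lt_one {α : Type} {s : Set α} {a : α} (h : a ∈ s) :
    ¬ s.encard < (1 : ℕ∞) :=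
  not_lt.2 (Set.one_le_encard_iff_nonempty.2 ⟨a, h⟩)

@[simp] lemma mem_atoms_c {I : Interp} {A : ConceptName} {o : Δ} :
    Atom.c A o ∈ I.atoms ↔ o ∈ I.concept A := Iff.rfl

@[simp] lemma mem_atoms_r {I : Interp} {P : RoleName} {o o' : Δ} :
    Atom.r P o o' ∈ I.atoms ↔ (o, o') ∈ I.role P := Iff.rfl

@[simp] lemma mem_distS_c {I J : Interp} {A : ConceptName} :
    SName.c A ∈ distSSub I J ↔ I.concept A ≠ J.concept A := Iff.rfl

@[simp] lemma mem_distS_r {I J : Interp} {P : RoleName} :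
    SName.r P ∈ distSSub I J ↔ I.role P ≠ J.role P := Iff.rfl

lemma mem_NonMod_Ncb {I : Interp} : I ∈ NonMod Ncb ↔ ((0 : Δ), (1 : Δ)) ∉ I.role 0 := by
  constructor
  · rintro ⟨a, ha, hs⟩
    simp only [Ncb, Finset.mem_singleton] at ha
    subst ha
    exact hs
  · intro h
    exact ⟨.memberR HasHusband mary john, by decide, h⟩

lemma r001_mem_symmDiff {I J : Interp} (hI : ((0:Δ),(1:Δ)) ∈ I.role 0)
    (hJ : ((0:Δ),(1:Δ)) ∉ J.role 0) : Atom.r 0 0 1 ∈ symmDiff I.atoms J.atoms :=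
  Set.mem_symmDiff.2 (Or.inl ⟨hI, hJ⟩)

lemma r0_mem_distS {I J : Interp} (hI : ((0:Δ),(1:Δ)) ∈ I.role 0)
    (hJ : ((0:Δ),(1:Δ)) ∉ J.role 0) : SName.r 0 ∈ distSSub I J := by
  show I.role 0 ≠ J.role 0
  intro h
  exact hJ (h ▸ hI)

lemma I0a_role01 : ((0:Δ),(1:Δ)) ∈ I0a.role 0 := by simp [I0a]

lemma I0b_role01 : ((0:Δ),(1:Δ)) ∈ I0b.role 0 := by simp [I0b]

lemma J0a_nonmod : J0a ∈ NonMod Ncb := mem_NonMod_Ncb.2 (by simp [J0a])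

lemma J0b_nonmod : J0b ∈ NonMod Ncb := mem_NonMod_Ncb.2 (by simp [J0b])

lemma distA_I0a_J0a : distASub I0a J0a = {Atom.r 0 0 1} := by
  ext a
  cases a with
  | c A o =>
    simp [distASub, Set.mem_symmDiff, Interp.atoms, I0a]
  | r P o o' =>
    by_cases hP : P = 0 <;>
      simp [distASub, Set.mem_symmDiff, Interp.atoms, I0a, J0a, hP, Prod.ext_iff, and_assoc]

lemma distACard_I0a_J0a : distACard I0a J0a = 1 := by
  show (distASub I0a J0a).encard = 1
  rw [distA_I0a_J0a]
  exact Set.encard_singleton _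

lemma distS_I0b_J0b : distSSub I0b J0b = {SName.r 0} := by
  ext n
  cases n with
  | c A => simp [I0b]
  | r P =>
    by_cases hP : P = 0 <;>
      simp [I0b, J0b, hP, Set.singleton_ne_empty]

lemma distSCard_I0b_J0b : distSCard I0b J0b = 1 := by
  show (distSSub I0b J0b).encard = 1
  rw [distS_I0b_J0b]
  exact Set.encard_singleton _

/-- Result of removing HasHusband(mary, john) from an interpretation. -/
def removeHH (I : Interp) : Interp :=
  ⟨I.concept, fun P => if P = 0 then I.role 0 \ {((0:Δ), (1:Δ))} else I.role P⟩

lemma removeHH_nonmod (I : Interp) : removeHH I ∈ NonMod Ncb := by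
  rw [mem_NonMod_Ncb]
  simp [removeHH]

lemma distA_removeHH {I : Interp} (hI : ((0:Δ),(1:Δ)) ∈ I.role 0) :
    distASub I (removeHH I) = {Atom.r 0 0 1} := by
  ext a
  cases a with
  | c A o =>
    simp [distASub, Set.mem_symmDiff, Interp.atoms, removeHH]
  | r P o o' =>
    by_cases hP : P = 0
    · subst hP
      simp only [distASub, Set.mem_symmDiff, Interp.atoms, removeHH, if_pos rfl,
        Set.mem_diff, Set.mem_singleton_iff, Atom.r.injEq, true_and]
      constructor
      · rintro (⟨h1, h2⟩ | ⟨⟨h1, h2⟩, h3⟩)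
        · by_contra hne
          have : (o, o') ≠ ((0:Δ), (1:Δ)) := by
            intro he
            rw [Prod.ext_iff] at he
            exact hne ⟨he.1, he.2⟩
          exact h2 ⟨h1, this⟩
        · exact absurd h1 h3
      · rintro ⟨rfl, rfl⟩
        exact Or.inl ⟨hI, fun h => h.2 rfl⟩
    · simp [distASub, Set.mem_symmDiff, Interp.atoms, removeHH, hP]

/-- Result of emptying the HasHusband role of an interpretation. -/
def removeHHb (I : Interp) : Interp :=
  ⟨I.concept, fun P => if P = 0 then ∅ else I.role P⟩

lemma removeHHb_nonmod (I : Interp) : removeHHb I ∈ NonMod Ncb := by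
  rw [mem_NonMod_Ncb]
  simp [removeHHb]

lemma distS_removeHHb {I : Interp} (hI : ((0:Δ),(1:Δ)) ∈ I.role 0) :
    distSSub I (removeHHb I) = {SName.r 0} := by
  ext n
  cases n with
  | c A => simp [removeHHb]
  | r P =>
    by_cases hP : P = 0
    · subst hP
      have hne : I.role 0 ≠ (removeHHb I).role 0 := by
        intro h
        have h2 : ((0:Δ),(1:Δ)) ∈ (removeHHb I).role 0 := h ▸ hI
        simp [removeHHb] at h2
      simp [hne]
    · simp [removeHHb, hP]

lemma keyA {I : Interp} (hW : ∀ x, x ∈ I.concept 1 → ∃ o', (x, o') ∈ I.role 0) :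
    ∃ x ∈ symmDiff I.atoms Ua.atoms, x ≠ Atom.r 0 0 1 := by
  by_cases h4 : (4 : Δ) ∈ I.concept 1
  · obtain ⟨o', ho'⟩ := hW 4 h4
    refine ⟨Atom.r 0 4 o', Set.mem_symmDiff.2 (Or.inl ⟨ho', ?_⟩), by simp⟩
    show (4, o') ∉ Ua.role 0
    rw [Ua_role]
    exact Set.notMem_empty _
  · exact ⟨Atom.c 1 4, Set.mem_symmDiff.2 (Or.inr ⟨Ua_wife_4, h4⟩), by simp⟩

lemma keyB {I : Interp}
    (hD : I.concept 2 ∩ {o | ∃ o', (o', o) ∈ I.role 0} = ∅)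
    (hM : ((0:Δ), (1:Δ)) ∈ I.role 0) :
    SName.r 0 ∈ distSSub I Ub ∧ SName.c 2 ∈ distSSub I Ub := by
  constructor
  · refine r0_mem_distS hM ?_
    rw [Ub_role]
    exact Set.notMem_empty _
  · show I.concept 2 ≠ Ub.concept 2
    intro h
    have h1 : (1:Δ) ∉ I.concept 2 := by
      intro hc
      exact Set.eq_empty_iff_forall_notMem.1 hD 1 ⟨hc, ⟨0, hM⟩⟩
    exact h1 (h.symm ▸ Ub_priest_1)

end Distances

section Bridge

lemma mod_Ka_role {I : Interp} (h : I ∈ Mod Ka) : ((0:Δ),(1:Δ)) ∈ I.role 0 :=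
  h (.memberR HasHusband mary john) (by decide)

lemma mod_Kc_role {I : Interp} (h : I ∈ Mod Kc) : ((0:Δ),(1:Δ)) ∈ I.role 0 :=
  h (.memberR HasHusband mary john) (by decide)

lemma mod_Kb_role {I : Interp} (h : I ∈ Mod Kb) : ((0:Δ),(1:Δ)) ∈ I.role 0 :=
  h (.memberR HasHusband mary john) (by decide)

lemma mod_Ka_wife {I : Interp} (h : I ∈ Mod Ka) :
    ∀ x, x ∈ I.concept 1 → ∃ o', (x, o') ∈ I.role 0 :=
  fun _ hx => h (.conceptIncl (.atom Wife) (.ex (.pos HasHusband))) (by decide) hx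

lemma mod_Kc_wife {I : Interp} (h : I ∈ Mod Kc) :
    ∀ x, x ∈ I.concept 1 → ∃ o', (x, o') ∈ I.role 0 :=
  fun _ hx => h (.conceptIncl (.atom Wife) (.ex (.pos HasHusband))) (by decide) hx

lemma mod_Kb_disj {I : Interp} (h : I ∈ Mod Kb) :
    I.concept 2 ∩ {o | ∃ o', (o', o) ∈ I.role 0} = ∅ :=
  h (.conceptDisj (.atom Priest) (.ex (.inv HasHusband))) (by decide)

lemma Ua_not_mod_Ka : Ua ∉ Mod Ka := by
  intro h
  have h2 : ((0:Δ),(1:Δ)) ∈ Ua.role 0 := h (.memberR HasHusband mary john) (by decide)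
  rw [Ua_role] at h2
  exact h2

lemma Ua_not_mod_Kc : Ua ∉ Mod Kc := by
  intro h
  have h2 : ((0:Δ),(1:Δ)) ∈ Ua.role 0 := h (.memberR HasHusband mary john) (by decide)
  rw [Ua_role] at h2
  exact h2

lemma Ub_not_mod_Kb : Ub ∉ Mod Kb := by
  intro h
  have h2 : ((0:Δ),(1:Δ)) ∈ Ub.role 0 := h (.memberR HasHusband mary john) (by decide)
  rw [Ub_role] at h2
  exact h2

lemma Ua_lt_a {I : Interp} (hrole : ((0:Δ),(1:Δ)) ∈ I.role 0)
    (hW : ∀ x, x ∈ I.concept 1 → ∃ o', (x, o') ∈ I.role 0) :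
    ({Atom.r 0 0 1} : Set Atom) < distASub I Ua ∧ (1 : ℕ∞) < distACard I Ua := by
  obtain ⟨x, hx, hxne⟩ := keyA hW
  have hx' : x ∈ distASub I Ua := hx
  have hmem : Atom.r 0 0 1 ∈ distASub I Ua :=
    r001_mem_symmDiff hrole (by rw [Ua_role]; exact Set.notMem_empty _)
  constructor
  · refine lt_of_le_of_ne (Set.singleton_subset_iff.2 hmem) ?_
    intro h
    rw [← h] at hx'
    exact hxne hx'
  · exact Set.one_lt_encard_iff.2 ⟨x, _, hx, hmem, hxne⟩

lemma Ub_lt_b {I : Interp} (hrole : ((0:Δ),(1:Δ)) ∈ I.role 0)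
    (hD : I.concept 2 ∩ {o | ∃ o', (o', o) ∈ I.role 0} = ∅) :
    ({SName.r 0} : Set SName) < distSSub I Ub ∧ (1 : ℕ∞) < distSCard I Ub := by
  obtain ⟨h1, h2⟩ := keyB hD hrole
  constructor
  · refine lt_of_le_of_ne (Set.singleton_subset_iff.2 h1) ?_
    intro h
    rw [← h] at h2
    exact absurd h2 (by simp)
  · exact Set.one_lt_encard_iff.2 ⟨_, _, h2, h1, by simp⟩

lemma distACard_removeHH {I : Interp} (hI : ((0:Δ),(1:Δ)) ∈ I.role 0) :
    distACard I (removeHH I) = 1 := by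
  show (distASub I (removeHH I)).encard = 1
  rw [distA_removeHH hI]
  exact Set.encard_singleton _

lemma distSCard_removeHHb {I : Interp} (hI : ((0:Δ),(1:Δ)) ∈ I.role 0) :
    distSCard I (removeHHb I) = 1 := by
  show (distSSub I (removeHHb I)).encard = 1
  rw [distS_removeHHb hI]
  exact Set.encard_singleton _

lemma distACard_I0a_J0a' : distACard I0a J0a = 1 := distACard_I0a_J0a

end Bridge

/-- DL-Lite_FR is not closed under ABox contraction for `glob^atoms_⊆` and for
the four local semantics `loc^y_z`:
(a) for the DL-Lite_core KB `Ka` under `loc^atoms_z`,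
(b) for the DL-Lite_core KB `Kb` under `loc^symbols_z`, and
(c) for the DL-Lite_F KB `Kc` under `glob^atoms_⊆`,
the contraction of the single ABox assertion HasHusband(mary, john) is not the
set of models of any DL-Lite_FR KB. -/
theorem abox_contraction_inexpressible :
    (∀ z : OrdKind, ¬ ∃ K' : KB, contractKB .loc .atoms z Ka Ncb = Mod K') ∧
    (∀ z : OrdKind, ¬ ∃ K' : KB, contractKB .loc .symbols z Kb Ncb = Mod K') ∧
    (¬ ∃ K' : KB, contractKB .glob .atoms .subset Kc Ncb = Mod K') := by
  refine ⟨?_, ?_, ?_⟩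
  · -- case (a): loc^atoms
    intro z
    cases z with
    | subset =>
      rintro ⟨K', hK⟩
      have hJmem : J0a ∈ contractKB .loc .atoms .subset Ka Ncb := by
        refine Set.mem_union_right _ ?_
        refine ⟨J0a_nonmod, I0a, I0a_mod_Ka, fun J' hJ' => ?_⟩
        rw [distA_I0a_J0a]
        exact not_lt_singleton' (r001_mem_symmDiff I0a_role01 (mem_NonMod_Ncb.1 hJ'))
      rw [hK] at hJmem
      have hUK : Ua ∈ Mod K' := fun a ha => sat_union_image fa_inj hd_a (hJmem a ha)
      rw [← hK] at hUK
      simp only [contractKB, expansionSet, Set.mem_union] at hUK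
      rcases hUK with h | h
      · exact Ua_not_mod_Ka h
      · obtain ⟨hN, I, hI, hmin⟩ := h
        refine hmin (removeHH I) (removeHH_nonmod I) ?_
        rw [distA_removeHH (mod_Ka_role hI)]
        exact (Ua_lt_a (mod_Ka_role hI) (mod_Ka_wife hI)).1
    | card =>
      rintro ⟨K', hK⟩
      have hJmem : J0a ∈ contractKB .loc .atoms .card Ka Ncb := by
        refine Set.mem_union_right _ ?_
        refine ⟨J0a_nonmod, I0a, I0a_mod_Ka, fun J' hJ' => ?_⟩
        rw [distACard_I0a_J0a]
        exact not_encard_lt_one (r001_mem_symmDiff I0a_role01 (mem_NonMod_Ncb.1 hJ'))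
      rw [hK] at hJmem
      have hUK : Ua ∈ Mod K' := fun a ha => sat_union_image fa_inj hd_a (hJmem a ha)
      rw [← hK] at hUK
      simp only [contractKB, expansionSet, Set.mem_union] at hUK
      rcases hUK with h | h
      · exact Ua_not_mod_Ka h
      · obtain ⟨hN, I, hI, hmin⟩ := h
        refine hmin (removeHH I) (removeHH_nonmod I) ?_
        rw [distACard_removeHH (mod_Ka_role hI)]
        exact (Ua_lt_a (mod_Ka_role hI) (mod_Ka_wife hI)).2
  · -- case (b): loc^symbols
    intro z
    cases z with
    | subset =>
      rintro ⟨K', hK⟩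
      have hJmem : J0b ∈ contractKB .loc .symbols .subset Kb Ncb := by
        refine Set.mem_union_right _ ?_
        refine ⟨J0b_nonmod, I0b, I0b_mod_Kb, fun J' hJ' => ?_⟩
        rw [distS_I0b_J0b]
        exact not_lt_singleton' (r0_mem_distS I0b_role01 (mem_NonMod_Ncb.1 hJ'))
      rw [hK] at hJmem
      have hUK : Ub ∈ Mod K' := fun a ha => sat_union_image fb_inj hd_b (hJmem a ha)
      rw [← hK] at hUK
      simp only [contractKB, expansionSet, Set.mem_union] at hUK
      rcases hUK with h | h
      · exact Ub_not_mod_Kb h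
      · obtain ⟨hN, I, hI, hmin⟩ := h
        refine hmin (removeHHb I) (removeHHb_nonmod I) ?_
        rw [distS_removeHHb (mod_Kb_role hI)]
        exact (Ub_lt_b (mod_Kb_role hI) (mod_Kb_disj hI)).1
    | card =>
      rintro ⟨K', hK⟩
      have hJmem : J0b ∈ contractKB .loc .symbols .card Kb Ncb := by
        refine Set.mem_union_right _ ?_
        refine ⟨J0b_nonmod, I0b, I0b_mod_Kb, fun J' hJ' => ?_⟩
        rw [distSCard_I0b_J0b]
        exact not_encard_lt_one (r0_mem_distS I0b_role01 (mem_NonMod_Ncb.1 hJ'))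
      rw [hK] at hJmem
      have hUK : Ub ∈ Mod K' := fun a ha => sat_union_image fb_inj hd_b (hJmem a ha)
      rw [← hK] at hUK
      simp only [contractKB, expansionSet, Set.mem_union] at hUK
      rcases hUK with h | h
      · exact Ub_not_mod_Kb h
      · obtain ⟨hN, I, hI, hmin⟩ := h
        refine hmin (removeHHb I) (removeHHb_nonmod I) ?_
        rw [distSCard_removeHHb (mod_Kb_role hI)]
        exact (Ub_lt_b (mod_Kb_role hI) (mod_Kb_disj hI)).2
  · -- case (c): glob^atoms_⊆
    rintro ⟨K', hK⟩
    have hJmem : J0a ∈ contractKB .glob .atoms .subset Kc Ncb := by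
      refine Set.mem_union_right _ ?_
      refine ⟨J0a_nonmod, I0a, I0a_mod_Kc, fun I' hI' J' hJ' => ?_⟩
      rw [distA_I0a_J0a]
      exact not_lt_singleton' (r001_mem_symmDiff (mod_Kc_role hI') (mem_NonMod_Ncb.1 hJ'))
    rw [hK] at hJmem
    have hUK : Ua ∈ Mod K' := fun a ha => sat_union_image fa_inj hd_a (hJmem a ha)
    rw [← hK] at hUK
    simp only [contractKB, expansionSet, Set.mem_union] at hUK
    rcases hUK with h | h
    · exact Ua_not_mod_Kc h
    · obtain ⟨hN, I, hI, hmin⟩ := h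
      refine hmin I0a I0a_mod_Kc J0a J0a_nonmod ?_
      rw [distA_I0a_J0a]
      exact (Ua_lt_a (mod_Kc_role hI) (mod_Kc_wife hI)).1

end DLLite
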